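/- Let A, A', B, B' be cochain complexes over an additive category, let f : A ⟶ B be a chain map, let φ : A ⟶ A' and ψ : B ⟶ B' be homotopy equivalences, and let φ⁻¹ : A' ⟶ A be a homotopy inverse of φ. Then the mapping cones Cone(f) and Cone(ψ ∘ f ∘ φ⁻¹) are homotopy equivalent. -/

import Mathlib

open CategoryTheory CategoryTheory.Limits CochainComplex

section Aux

variable {V W : Type*} [Category V] [Category W] [Preadditive V] [Preadditive W]
  {ι : Type*} {c : ComplexShape ι}
  (F : V ⥤ W) [F.Additive] [F.Full] [F.Faithful]

/-- A fully faithful additive functor reflects homotopies. -/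
noncomputable def reflectHomotopy {X Y : HomologicalComplex V c} (u v : X ⟶ Y)
    (H : Homotopy ((F.mapHomologicalComplex c).map u) ((F.mapHomologicalComplex c).map v)) :
    Homotopy u v where
  hom i j := F.preimage (H.hom i j)
  zero i j h := F.map_injective ((F.map_preimage (H.hom i j)).trans ((H.zero i j h).trans (F.map_zero _ _).symm))
  comm i := F.map_injective (by
    have h := H.comm i; simp [dNext, prevD] at h; simp [dNext, prevD, F.map_preimage (H.hom _ _)]; exact h)

/-- A fully faithful additive functor reflects homotopy equivalences. -/
noncomputable def reflectHomotopyEquiv (X Y : HomologicalComplex V c)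
    (E : HomotopyEquiv ((F.mapHomologicalComplex c).obj X)
      ((F.mapHomologicalComplex c).obj Y)) :
    HomotopyEquiv X Y := by
  let hom : X ⟶ Y :=
    { f := fun n => F.preimage (E.hom.f n)
      comm' := fun i j hij => F.map_injective (by simp [F.map_preimage (E.hom.f _)]; exact E.hom.comm i j) }
  let inv : Y ⟶ X :=
    { f := fun n => F.preimage (E.inv.f n)
      comm' := fun i j hij => F.map_injective (by simp [F.map_preimage (E.inv.f _)]; exact E.inv.comm i j) }
  have hhom : (F.mapHomologicalComplex c).map hom = E.hom := by ext n; simp [hom]; exact F.map_preimage _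
  have hinv : (F.mapHomologicalComplex c).map inv = E.inv := by ext n; simp [inv]; exact F.map_preimage _
  exact
    { hom := hom
      inv := inv
      homotopyHomInvId := reflectHomotopy F _ _
        ((Homotopy.ofEq (by rw [Functor.map_comp, hhom, hinv])).trans
          (E.homotopyHomInvId.trans (Homotopy.ofEq ((F.mapHomologicalComplex c).map_id X).symm)))
      homotopyInvHomId := reflectHomotopy F _ _
        ((Homotopy.ofEq (by rw [Functor.map_comp, hhom, hinv])).trans
          (E.homotopyInvHomId.trans (Homotopy.ofEq ((F.mapHomologicalComplex c).map_id Y).symm))) }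

/-- In a nice category, the mapping cones of two chain maps related by a homotopy-commutative
square with homotopy equivalences as vertical maps are homotopy equivalent. -/
noncomputable def coneHomotopyEquivAux {D : Type*} [Category D] [Preadditive D]
    [HasZeroObject D] [HasBinaryBiproducts D]
    {A A' B B' : CochainComplex D ℤ} (f : A ⟶ B) (g : A' ⟶ B')
    (eA : HomotopyEquiv A A') (eB : HomotopyEquiv B B')
    (H : Homotopy (f ≫ eB.hom) (eA.hom ≫ g)) :
    HomotopyEquiv (mappingCone f) (mappingCone g) := by
  have h₁ := HomotopyCategory.mappingCone_triangleh_distinguished f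
  have h₂ := HomotopyCategory.mappingCone_triangleh_distinguished g
  let e₁ := HomotopyCategory.isoOfHomotopyEquiv eA
  let e₂ := HomotopyCategory.isoOfHomotopyEquiv eB
  have comm : (mappingCone.triangleh f).mor₁ ≫ e₂.hom =
      e₁.hom ≫ (mappingCone.triangleh g).mor₁ := by
    dsimp [e₁, e₂, mappingCone.triangleh, mappingCone.triangle, Functor.mapTriangle_obj,
      Pretriangulated.Triangle.mk_mor₁, HomotopyCategory.isoOfHomotopyEquiv_hom]
    change (HomotopyCategory.quotient _ _).map f ≫ (HomotopyCategory.quotient _ _).map eB.hom =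
      (HomotopyCategory.quotient _ _).map eA.hom ≫ (HomotopyCategory.quotient _ _).map g
    rw [← Functor.map_comp, ← Functor.map_comp]
    exact HomotopyCategory.eq_of_homotopy _ _ H
  exact HomotopyCategory.homotopyEquivOfIso
    ((Pretriangulated.Triangle.π₃).mapIso
      (Pretriangulated.isoTriangleOfIso₁₂ _ _ h₁ h₂ e₁ e₂ comm))

instance preadditiveYoneda_additive {E : Type*} [Category E] [Preadditive E] :
    Functor.Additive (preadditiveYoneda (C := E)) where
  map_add := by
    intros
    ext U x
    dsimp [preadditiveYoneda]
    exact Preadditive.comp_add _ _ _ _ _ _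

end Aux

/-- If `φ : A ⟶ A'` and `ψ : B ⟶ B'` are homotopy equivalences of cochain complexes, with
`φinv` a homotopy inverse of `φ`, then for any chain map `f : A ⟶ B` the mapping cones of
`f` and of `ψ ∘ f ∘ φ⁻¹` are homotopy equivalent. -/
theorem mappingCone_homotopyEquiv_of_homotopyEquiv
    {C : Type*} [Category C] [Preadditive C] [HasBinaryBiproducts C]
    {A A' B B' : CochainComplex C ℤ} (f : A ⟶ B)
    (φ : A ⟶ A') (φinv : A' ⟶ A) (ψ : B ⟶ B') (ψinv : B' ⟶ B)
    (hφ₁ : Homotopy (φ ≫ φinv) (𝟙 A)) (hφ₂ : Homotopy (φinv ≫ φ) (𝟙 A'))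
    (hψ₁ : Homotopy (ψ ≫ ψinv) (𝟙 B)) (hψ₂ : Homotopy (ψinv ≫ ψ) (𝟙 B')) :
    Nonempty (HomotopyEquiv (mappingCone f) (mappingCone (φinv ≫ f ≫ ψ))) := by
  let F := preadditiveYoneda (C := C)
  let Φ := F.mapHomologicalComplex (ComplexShape.up ℤ)
  set g : A' ⟶ B' := φinv ≫ f ≫ ψ with hg
  -- the square commutes up to homotopy
  have Hsq : Homotopy (f ≫ ψ) (φ ≫ g) :=
    (Homotopy.ofEq (by simp)).trans
      ((Homotopy.compRight hφ₁.symm (f ≫ ψ)).trans (Homotopy.ofEq (by simp [hg])))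
  -- downstairs homotopy equivalence of cones
  have E₀ : HomotopyEquiv (mappingCone (Φ.map f)) (mappingCone (Φ.map g)) :=
    coneHomotopyEquivAux (Φ.map f) (Φ.map g)
      (F.mapHomotopyEquiv ⟨φ, φinv, hφ₁, hφ₂⟩)
      (F.mapHomotopyEquiv ⟨ψ, ψinv, hψ₁, hψ₂⟩)
      (by
        refine (Homotopy.ofEq (Φ.map_comp f ψ).symm).trans
          ((F.mapHomotopy Hsq).trans (Homotopy.ofEq (Φ.map_comp φ g))))
  -- transfer through the comparison isomorphisms
  have E₁ : HomotopyEquiv (Φ.obj (mappingCone f)) (Φ.obj (mappingCone g)) :=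
    (HomotopyEquiv.ofIso (mappingCone.mapHomologicalComplexIso f F)).trans
      (E₀.trans (HomotopyEquiv.ofIso (mappingCone.mapHomologicalComplexIso g F).symm))
  exact ⟨reflectHomotopyEquiv F _ _ E₁⟩
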